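/- For i ∈ {1,2}, let lp_i be a coherent conditional lower prevision on C_i ⊆ C(X_i), let 𝔅_i ⊆ P_∅(X_i), and let C ⊆ C(X1×X2) be an independent domain that contains C_1 and C_2 (gambles and events being identified with their cylindrical counterparts). Then the restriction of lp1⊗lp2 to C is an independent product of lp1 and lp2, and it is pointwise smallest among them: every independent product lp of lp1 and lp2 on C satisfies lp(f|B) ≥ (lp1⊗lp2)(f|B) for all (f,B) ∈ C. Hence the independent natural extension of lp1 and lp2 on C exists and equals the restriction of lp1⊗lp2 to C. -/

import Mathlib

open scoped BigOperators

namespace IPaper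

variable {X : Type*}

/-- A gamble on `X`: a bounded real-valued function. -/
def IsGamble (f : X → ℝ) : Prop := ∃ M : ℝ, ∀ x, |f x| ≤ M

/-- The indicator gamble of an event. -/
noncomputable def ind (B : Set X) : X → ℝ := Set.indicator B 1

/-- The set `G_{>0}(X)` of nonnegative nonzero gambles. -/
def Gpos (X : Type*) : Set (X → ℝ) := {f | IsGamble f ∧ 0 ≤ f ∧ f ≠ 0}

/-- A coherent set of desirable gambles. -/
structure CoherentSDG (D : Set (X → ℝ)) : Prop where
  subset_gambles : ∀ f ∈ D, IsGamble f
  d1 : ∀ f : X → ℝ, IsGamble f → 0 ≤ f → f ≠ 0 → f ∈ D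
  d2 : ∀ f ∈ D, ∀ l : ℝ, 0 < l → l • f ∈ D
  d3 : ∀ f ∈ D, ∀ g ∈ D, f + g ∈ D
  d4 : ∀ f : X → ℝ, f ≤ 0 → f ∉ D

/-- `posi A`: positive linear hull of `A`. -/
def posi (A : Set (X → ℝ)) : Set (X → ℝ) :=
  {g | ∃ (n : ℕ) (l : Fin (n + 1) → ℝ) (h : Fin (n + 1) → X → ℝ),
    (∀ i, 0 < l i) ∧ (∀ i, h i ∈ A) ∧ g = ∑ i, l i • h i}

/-- `E(A) := posi (A ∪ G_{>0}(X))`. -/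
def natExtSet (A : Set (X → ℝ)) : Set (X → ℝ) := posi (A ∪ Gpos X)

/-- `C(X)`: all pairs of a gamble and a nonempty event. -/
def domC (X : Type*) : Set ((X → ℝ) × Set X) := {p | IsGamble p.1 ∧ p.2.Nonempty}

/-- The conditional lower prevision `lp_D` derived from a set of gambles `D`. -/
noncomputable def lpOf (D : Set (X → ℝ)) (f : X → ℝ) (B : Set X) : EReal :=
  sSup (Real.toEReal '' {m : ℝ | (fun x => (f x - m) * ind B x) ∈ D})

/-- Coherence (Williams) of a conditional lower prevision on a domain `C`. -/
def Coherent (C : Set ((X → ℝ) × Set X)) (lp : (X → ℝ) → Set X → EReal) : Prop :=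
  ∃ D : Set (X → ℝ), CoherentSDG D ∧ ∀ p ∈ C, lp p.1 p.2 = lpOf D p.1 p.2

/-- The set `A_lp`. -/
def Alp (C : Set ((X → ℝ) × Set X)) (lp : (X → ℝ) → Set X → EReal) : Set (X → ℝ) :=
  {g | ∃ p ∈ C, ∃ m : ℝ, (m : EReal) < lp p.1 p.2 ∧ g = fun x => (p.1 x - m) * ind p.2 x}

/-- `E(lp) := E(A_lp)`. -/
def ElpSet (C : Set ((X → ℝ) × Set X)) (lp : (X → ℝ) → Set X → EReal) : Set (X → ℝ) :=
  natExtSet (Alp C lp)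

/-- The natural extension of `lp` to all of `C(X)`. -/
noncomputable def natExtLP (C : Set ((X → ℝ) × Set X)) (lp : (X → ℝ) → Set X → EReal)
    (f : X → ℝ) (B : Set X) : EReal :=
  lpOf (ElpSet C lp) f B

/-- Simple `B`-measurable gamble. -/
def SimpleMeas (Bfam : Set (Set X)) (g : X → ℝ) : Prop :=
  ∃ (c0 : ℝ) (n : ℕ) (c : Fin n → ℝ) (Bs : Fin n → Set X),
    0 ≤ c0 ∧ (∀ i, 0 ≤ c i) ∧ (∀ i, Bs i ∈ Bfam) ∧
    g = fun x => c0 + ∑ i, c i * ind (Bs i) x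

/-- `B`-measurable gamble: uniform limit of nonnegative simple `B`-measurable gambles. -/
def BMeas (Bfam : Set (Set X)) (g : X → ℝ) : Prop :=
  ∃ gs : ℕ → X → ℝ, (∀ n, 0 ≤ gs n ∧ SimpleMeas Bfam (gs n)) ∧
    TendstoUniformly gs g Filter.atTop

/-- A conditional linear prevision on `C(X)`: a coherent self-conjugate conditional
lower prevision on the full domain. -/
def CondLinPrev (P : (X → ℝ) → Set X → EReal) : Prop :=
  Coherent (domC X) P ∧ ∀ p ∈ domC X, P p.1 p.2 = -P (-p.1) p.2

section Product

variable {X1 X2 : Type*}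

/-- `A_{1→2}`. -/
def A12 (D2 : Set (X2 → ℝ)) (F1 : Set (Set X1)) : Set (X1 × X2 → ℝ) :=
  {g | ∃ f2 ∈ D2, ∃ B1 ∈ F1 ∪ {Set.univ}, g = fun p => f2 p.2 * ind B1 p.1}

/-- `A_{2→1}`. -/
def A21 (D1 : Set (X1 → ℝ)) (F2 : Set (Set X2)) : Set (X1 × X2 → ℝ) :=
  {g | ∃ f1 ∈ D1, ∃ B2 ∈ F2 ∪ {Set.univ}, g = fun p => f1 p.1 * ind B2 p.2}

/-- `D1 ⊗ D2`, relative to the families of conditioning events `F1`, `F2`. -/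
def indNatExt (D1 : Set (X1 → ℝ)) (D2 : Set (X2 → ℝ))
    (F1 : Set (Set X1)) (F2 : Set (Set X2)) : Set (X1 × X2 → ℝ) :=
  natExtSet (A12 D2 F1 ∪ A21 D1 F2)

/-- `marg_1(D)`. -/
def marg1 (D : Set (X1 × X2 → ℝ)) : Set (X1 → ℝ) :=
  {f | IsGamble f ∧ (fun p : X1 × X2 => f p.1) ∈ D}

/-- `marg_2(D)`. -/
def marg2 (D : Set (X1 × X2 → ℝ)) : Set (X2 → ℝ) :=
  {f | IsGamble f ∧ (fun p : X1 × X2 => f p.2) ∈ D}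

/-- `marg_1(D|B2)`. -/
def marg1c (D : Set (X1 × X2 → ℝ)) (B2 : Set X2) : Set (X1 → ℝ) :=
  {f | IsGamble f ∧ (fun p : X1 × X2 => f p.1 * ind B2 p.2) ∈ D}

/-- `marg_2(D|B1)`. -/
def marg2c (D : Set (X1 × X2 → ℝ)) (B1 : Set X1) : Set (X2 → ℝ) :=
  {f | IsGamble f ∧ (fun p : X1 × X2 => f p.2 * ind B1 p.1) ∈ D}

/-- Epistemic independence of a set of desirable gambles on `X1 × X2`. -/
def EpIndSDG (F1 : Set (Set X1)) (F2 : Set (Set X2)) (D : Set (X1 × X2 → ℝ)) : Prop :=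
  (∀ B2 ∈ F2, marg1c D B2 = marg1 D) ∧ (∀ B1 ∈ F1, marg2c D B1 = marg2 D)

/-- Independent product (of sets of desirable gambles). -/
def IndProductSDG (F1 : Set (Set X1)) (F2 : Set (Set X2))
    (D1 : Set (X1 → ℝ)) (D2 : Set (X2 → ℝ)) (D : Set (X1 × X2 → ℝ)) : Prop :=
  CoherentSDG D ∧ EpIndSDG F1 F2 D ∧ marg1 D = D1 ∧ marg2 D = D2

/-- The independent natural extension `lp1 ⊗ lp2` on `C(X1 × X2)`. -/
noncomputable def lpProd (C1 : Set ((X1 → ℝ) × Set X1)) (lp1 : (X1 → ℝ) → Set X1 → EReal)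
    (C2 : Set ((X2 → ℝ) × Set X2)) (lp2 : (X2 → ℝ) → Set X2 → EReal)
    (F1 : Set (Set X1)) (F2 : Set (Set X2)) :
    (X1 × X2 → ℝ) → Set (X1 × X2) → EReal :=
  lpOf (indNatExt (ElpSet C1 lp1) (ElpSet C2 lp2) F1 F2)

/-- An independent domain `C ⊆ C(X1 × X2)`. -/
def IndepDomain (F1 : Set (Set X1)) (F2 : Set (Set X2))
    (C : Set ((X1 × X2 → ℝ) × Set (X1 × X2))) : Prop :=
  (∀ (f1 : X1 → ℝ) (B1 : Set X1), IsGamble f1 → B1.Nonempty → ∀ B2 ∈ F2,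
    (((fun p : X1 × X2 => f1 p.1), B1 ×ˢ (Set.univ : Set X2)) ∈ C ↔
      ((fun p : X1 × X2 => f1 p.1), B1 ×ˢ B2) ∈ C)) ∧
  (∀ (f2 : X2 → ℝ) (B2 : Set X2), IsGamble f2 → B2.Nonempty → ∀ B1 ∈ F1,
    (((fun p : X1 × X2 => f2 p.2), (Set.univ : Set X1) ×ˢ B2) ∈ C ↔
      ((fun p : X1 × X2 => f2 p.2), B1 ×ˢ B2) ∈ C))

/-- Epistemic independence of a conditional lower prevision on a domain `C`. -/
def EpIndLP (F1 : Set (Set X1)) (F2 : Set (Set X2))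
    (C : Set ((X1 × X2 → ℝ) × Set (X1 × X2)))
    (lp : (X1 × X2 → ℝ) → Set (X1 × X2) → EReal) : Prop :=
  (∀ (f1 : X1 → ℝ) (B1 : Set X1), IsGamble f1 → B1.Nonempty →
    ((fun p : X1 × X2 => f1 p.1), B1 ×ˢ (Set.univ : Set X2)) ∈ C → ∀ B2 ∈ F2,
    lp (fun p : X1 × X2 => f1 p.1) (B1 ×ˢ (Set.univ : Set X2)) =
      lp (fun p : X1 × X2 => f1 p.1) (B1 ×ˢ B2)) ∧
  (∀ (f2 : X2 → ℝ) (B2 : Set X2), IsGamble f2 → B2.Nonempty →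
    ((fun p : X1 × X2 => f2 p.2), (Set.univ : Set X1) ×ˢ B2) ∈ C → ∀ B1 ∈ F1,
    lp (fun p : X1 × X2 => f2 p.2) ((Set.univ : Set X1) ×ˢ B2) =
      lp (fun p : X1 × X2 => f2 p.2) (B1 ×ˢ B2))

/-- Independent product of two conditional lower previsions, on the joint domain `C`. -/
def IndProductLP (F1 : Set (Set X1)) (F2 : Set (Set X2))
    (C1 : Set ((X1 → ℝ) × Set X1)) (lp1 : (X1 → ℝ) → Set X1 → EReal)
    (C2 : Set ((X2 → ℝ) × Set X2)) (lp2 : (X2 → ℝ) → Set X2 → EReal)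
    (C : Set ((X1 × X2 → ℝ) × Set (X1 × X2)))
    (lp : (X1 × X2 → ℝ) → Set (X1 × X2) → EReal) : Prop :=
  Coherent C lp ∧ EpIndLP F1 F2 C lp ∧
  (∀ p ∈ C1, lp (fun q : X1 × X2 => p.1 q.1) (p.2 ×ˢ (Set.univ : Set X2)) = lp1 p.1 p.2) ∧
  (∀ p ∈ C2, lp (fun q : X1 × X2 => p.1 q.2) ((Set.univ : Set X1) ×ˢ p.2) = lp2 p.1 p.2)

end Product


-- ==================== Stage 1 : helpers ====================

lemma ind_apply_mem {B : Set X} {x : X} (hx : x ∈ B) : ind B x = 1 := by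
  simp [ind, Set.indicator_of_mem hx]

lemma ind_apply_not_mem {B : Set X} {x : X} (hx : x ∉ B) : ind B x = 0 := by
  simp [ind, Set.indicator_of_notMem hx]

lemma ind_nonneg (B : Set X) (x : X) : 0 ≤ ind B x := by
  by_cases hx : x ∈ B
  · rw [ind_apply_mem hx]; norm_num
  · rw [ind_apply_not_mem hx]

lemma ind_le_one (B : Set X) (x : X) : ind B x ≤ 1 := by
  by_cases hx : x ∈ B
  · rw [ind_apply_mem hx]
  · rw [ind_apply_not_mem hx]; norm_num

lemma abs_ind_le_one (B : Set X) (x : X) : |ind B x| ≤ 1 := by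
  rw [abs_of_nonneg (ind_nonneg B x)]; exact ind_le_one B x

lemma gamble_ind (B : Set X) : IsGamble (ind B) := ⟨1, abs_ind_le_one B⟩

lemma IsGamble.bound_nonneg {f : X → ℝ} (h : IsGamble f) :
    ∃ M : ℝ, 0 ≤ M ∧ ∀ x, |f x| ≤ M := by
  obtain ⟨M, hM⟩ := h
  exact ⟨max M 0, le_max_right _ _, fun x => le_trans (hM x) (le_max_left _ _)⟩

lemma IsGamble.add {f g : X → ℝ} (hf : IsGamble f) (hg : IsGamble g) :
    IsGamble (f + g) := by
  obtain ⟨M, hM⟩ := hf; obtain ⟨N, hN⟩ := hg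
  exact ⟨M + N, fun x => (abs_add_le _ _).trans (add_le_add (hM x) (hN x))⟩

lemma IsGamble.add' {f g : X → ℝ} (hf : IsGamble f) (hg : IsGamble g) :
    IsGamble (fun x => f x + g x) := hf.add hg

lemma IsGamble.neg {f : X → ℝ} (hf : IsGamble f) : IsGamble (-f) := by
  obtain ⟨M, hM⟩ := hf
  exact ⟨M, fun x => by simpa using hM x⟩

lemma IsGamble.smul {f : X → ℝ} (hf : IsGamble f) (a : ℝ) : IsGamble (a • f) := by
  obtain ⟨M, hM, hMb⟩ := hf.bound_nonneg
  refine ⟨|a| * M, fun x => ?_⟩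
  simp only [Pi.smul_apply, smul_eq_mul, abs_mul]
  exact mul_le_mul_of_nonneg_left (hMb x) (abs_nonneg a)

lemma IsGamble.mul {f g : X → ℝ} (hf : IsGamble f) (hg : IsGamble g) :
    IsGamble (fun x => f x * g x) := by
  obtain ⟨M, hM0, hM⟩ := hf.bound_nonneg
  obtain ⟨N, hN0, hN⟩ := hg.bound_nonneg
  refine ⟨M * N, fun x => ?_⟩
  rw [abs_mul]
  exact mul_le_mul (hM x) (hN x) (abs_nonneg _) hM0

lemma IsGamble.const (c : ℝ) : IsGamble (fun _ : X => c) := ⟨|c|, fun _ => le_rfl⟩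

lemma IsGamble.sub_const {f : X → ℝ} (hf : IsGamble f) (m : ℝ) :
    IsGamble (fun x => f x - m) := by
  have := hf.add' (IsGamble.const (-m))
  simpa [sub_eq_add_neg] using this

lemma IsGamble.sum {ι : Type*} (s : Finset ι) (f : ι → X → ℝ)
    (hf : ∀ i ∈ s, IsGamble (f i)) : IsGamble (∑ i ∈ s, f i) := by
  classical
  induction s using Finset.induction_on with
  | empty => exact ⟨0, by simp⟩
  | insert a s hnotmem ih =>
    rw [Finset.sum_insert hnotmem]
    exact (hf a (Finset.mem_insert_self a s)).add
      (ih fun i hi => hf i (Finset.mem_insert_of_mem hi))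

lemma gamble_zero : IsGamble (0 : X → ℝ) := ⟨0, by simp⟩

-- nonneg nonzero gambles
lemma mem_Gpos {f : X → ℝ} (hf : IsGamble f) (h0 : 0 ≤ f) (hne : f ≠ 0) :
    f ∈ Gpos X := ⟨hf, h0, hne⟩

lemma Gpos_subset {D : Set (X → ℝ)} (hD : CoherentSDG D) : Gpos X ⊆ D :=
  fun f hf => hD.d1 f hf.1 hf.2.1 hf.2.2

-- D coherent: add a nonneg gamble
lemma CoherentSDG.add_nonneg_mem {D : Set (X → ℝ)} (hD : CoherentSDG D)
    {f g : X → ℝ} (hf : f ∈ D) (hg : IsGamble g) (h0 : 0 ≤ g) : f + g ∈ D := by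
  by_cases hgz : g = 0
  · simpa [hgz] using hf
  · exact hD.d3 f hf g (hD.d1 g hg h0 hgz)

-- positive finite combinations stay in D
lemma CoherentSDG.combo_mem {D : Set (X → ℝ)} (hD : CoherentSDG D)
    {ι : Type*} (s : Finset ι) (hs : s.Nonempty) (a : ι → ℝ) (w : ι → X → ℝ)
    (ha : ∀ i ∈ s, 0 < a i) (hw : ∀ i ∈ s, w i ∈ D) :
    (∑ i ∈ s, a i • w i) ∈ D := by
  classical
  induction s using Finset.induction_on with
  | empty => exact absurd hs (by simp)
  | insert b s hnotmem ih =>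
    rw [Finset.sum_insert hnotmem]
    by_cases hse : s.Nonempty
    · exact hD.d3 _ (hD.d2 _ (hw b (Finset.mem_insert_self b s)) _
        (ha b (Finset.mem_insert_self b s)))
        _ (ih hse (fun i hi => ha i (Finset.mem_insert_of_mem hi))
             (fun i hi => hw i (Finset.mem_insert_of_mem hi)))
    · rw [Finset.not_nonempty_iff_eq_empty] at hse
      subst hse
      simpa using hD.d2 _ (hw b (Finset.mem_insert_self b ∅)) _
        (ha b (Finset.mem_insert_self b ∅))

-- nonneg finite combinations: in D or zero
lemma CoherentSDG.combo_mem0 {D : Set (X → ℝ)} (hD : CoherentSDG D)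
    {ι : Type*} (s : Finset ι) (a : ι → ℝ) (w : ι → X → ℝ)
    (ha : ∀ i ∈ s, 0 ≤ a i) (hw : ∀ i ∈ s, w i ∈ D) :
    (∑ i ∈ s, a i • w i) ∈ D ∨ (∑ i ∈ s, a i • w i) = 0 := by
  classical
  induction s using Finset.induction_on with
  | empty => right; simp
  | insert b s hnotmem ih =>
    rw [Finset.sum_insert hnotmem]
    have hb := ha b (Finset.mem_insert_self b s)
    have ih' := ih (fun i hi => ha i (Finset.mem_insert_of_mem hi))
      (fun i hi => hw i (Finset.mem_insert_of_mem hi))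
    rcases eq_or_lt_of_le hb with hb0 | hbpos
    · rw [← hb0, zero_smul, zero_add]; exact ih'
    · have hbD : a b • w b ∈ D := hD.d2 _ (hw b (Finset.mem_insert_self b s)) _ hbpos
      rcases ih' with h | h
      · exact Or.inl (hD.d3 _ hbD _ h)
      · rw [h, add_zero]; exact Or.inl hbD

lemma memU0_add {D : Set (X → ℝ)} (hD : CoherentSDG D) {a b : X → ℝ}
    (ha : a ∈ D ∨ a = 0) (hb : b ∈ D ∨ b = 0) : a + b ∈ D ∨ a + b = 0 := by
  rcases ha with ha | ha <;> rcases hb with hb | hb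
  · exact Or.inl (hD.d3 _ ha _ hb)
  · rw [hb, add_zero]; exact Or.inl ha
  · rw [ha, zero_add]; exact Or.inl hb
  · rw [ha, hb, add_zero]; exact Or.inr rfl

-- ========== posi lemmas ==========

lemma mem_posi_self {A : Set (X → ℝ)} {f : X → ℝ} (hf : f ∈ A) : f ∈ posi A :=
  ⟨0, fun _ => 1, fun _ => f, fun _ => one_pos, fun _ => hf, by simp⟩

lemma posi_mono {A B : Set (X → ℝ)} (h : A ⊆ B) : posi A ⊆ posi B := by
  rintro g ⟨n, l, hh, hl, hA, rfl⟩
  exact ⟨n, l, hh, hl, fun i => h (hA i), rfl⟩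

lemma posi_add {A : Set (X → ℝ)} {f g : X → ℝ} (hf : f ∈ posi A) (hg : g ∈ posi A) :
    f + g ∈ posi A := by
  obtain ⟨n, l, h, hl, hA, rfl⟩ := hf
  obtain ⟨m, l', h', hl', hA', rfl⟩ := hg
  refine ⟨n + 1 + m, (Fin.append l l' : Fin ((n+1)+(m+1)) → ℝ),
    (Fin.append h h' : Fin ((n+1)+(m+1)) → X → ℝ), ?_, ?_, ?_⟩
  · intro i
    refine Fin.addCases (m := n+1) (n := m+1)
      (motive := fun j => 0 < Fin.append l l' j) (fun i => ?_) (fun i => ?_) i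
    · simpa using hl i
    · simpa using hl' i
  · intro i
    refine Fin.addCases (m := n+1) (n := m+1)
      (motive := fun j => Fin.append h h' j ∈ A) (fun i => ?_) (fun i => ?_) i
    · simpa using hA i
    · simpa using hA' i
  · symm
    refine (Fin.sum_univ_add (f := fun i : Fin ((n+1)+(m+1)) =>
      Fin.append l l' i • Fin.append h h' i)).trans ?_
    congr 1
    · exact Finset.sum_congr rfl fun i _ => by simp
    · exact Finset.sum_congr rfl fun i _ => by simp

lemma posi_smul {A : Set (X → ℝ)} {f : X → ℝ} (hf : f ∈ posi A) {a : ℝ} (ha : 0 < a) :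
    a • f ∈ posi A := by
  obtain ⟨n, l, h, hl, hA, rfl⟩ := hf
  refine ⟨n, fun i => a * l i, h, fun i => mul_pos ha (hl i), hA, ?_⟩
  rw [Finset.smul_sum]
  exact Finset.sum_congr rfl fun i _ => by rw [smul_smul]

lemma posi_gambles {A : Set (X → ℝ)} (hA : ∀ f ∈ A, IsGamble f) :
    ∀ f ∈ posi A, IsGamble f := by
  rintro g ⟨n, l, h, hl, hmem, rfl⟩
  exact IsGamble.sum _ _ fun i _ => (hA _ (hmem i)).smul (l i)

-- natExtSet lemmas
lemma subset_natExtSet {A : Set (X → ℝ)} : A ⊆ natExtSet A :=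
  fun f hf => mem_posi_self (Set.mem_union_left _ hf)

lemma Gpos_subset_natExtSet {A : Set (X → ℝ)} : Gpos X ⊆ natExtSet A :=
  fun f hf => mem_posi_self (Set.mem_union_right _ hf)

lemma natExtSet_mono {A B : Set (X → ℝ)} (h : A ⊆ B) : natExtSet A ⊆ natExtSet B :=
  posi_mono (Set.union_subset_union_left _ h)

lemma natExtSet_subset {A D : Set (X → ℝ)} (hD : CoherentSDG D) (hA : A ⊆ D) :
    natExtSet A ⊆ D := by
  rintro g ⟨n, l, h, hl, hmem, rfl⟩
  exact hD.combo_mem Finset.univ Finset.univ_nonempty l h (fun i _ => hl i)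
    (fun i _ => (hmem i).elim (fun h' => hA h') (fun h' => Gpos_subset hD h'))

-- coherence of natExtSet given no partial loss
lemma natExtSet_coherent {A : Set (X → ℝ)} (hA : ∀ f ∈ A, IsGamble f)
    (hnl : ∀ t ∈ natExtSet A, ¬ t ≤ 0) : CoherentSDG (natExtSet A) where
  subset_gambles := posi_gambles fun f hf =>
    hf.elim (fun h => hA f h) (fun h => h.1)
  d1 := fun f hf h0 hne => Gpos_subset_natExtSet ⟨hf, h0, hne⟩
  d2 := fun f hf l hl => posi_smul hf hl
  d3 := fun f hf g hg => posi_add hf hg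
  d4 := fun f hf hmem => hnl f hmem hf

-- ========== lpOf lemmas ==========

lemma lpOf_le_lpOf {D D' : Set (X → ℝ)} (h : D ⊆ D') (f : X → ℝ) (B : Set X) :
    lpOf D f B ≤ lpOf D' f B :=
  sSup_le_sSup (Set.image_mono (fun _ hm => h hm))

lemma mem_of_lt_lpOf {D : Set (X → ℝ)} (hD : CoherentSDG D) {f : X → ℝ} {B : Set X}
    (hB : B.Nonempty) {m : ℝ} (hm : (m : EReal) < lpOf D f B) :
    (fun x => (f x - m) * ind B x) ∈ D := by
  rw [lpOf, lt_sSup_iff] at hm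
  obtain ⟨b, hb, hmb⟩ := hm
  obtain ⟨m', hm', rfl⟩ := hb
  rw [EReal.coe_lt_coe_iff] at hmb
  have h2 : (fun x => (f x - m) * ind B x)
      = (fun x => (f x - m') * ind B x) + (m' - m) • ind B := by
    funext x
    simp only [Pi.add_apply, Pi.smul_apply, smul_eq_mul]
    ring
  rw [h2]
  refine hD.add_nonneg_mem hm' ((gamble_ind B).smul _) ?_
  intro x
  simp only [Pi.smul_apply, smul_eq_mul, Pi.zero_apply]
  exact mul_nonneg (by linarith) (ind_nonneg B x)

lemma le_lpOf {D : Set (X → ℝ)} {f : X → ℝ} {B : Set X} {a : EReal}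
    (h : ∀ m : ℝ, (m : EReal) < a → (fun x => (f x - m) * ind B x) ∈ D) :
    a ≤ lpOf D f B := by
  by_contra hc
  push_neg at hc
  obtain ⟨m, hm1, hm2⟩ := EReal.exists_between_coe_real hc
  have hle : (m : EReal) ≤ lpOf D f B := by
    rw [lpOf]
    exact le_sSup (Set.mem_image_of_mem _ (h m hm2))
  exact absurd hle (not_le.mpr hm1)

-- ========== insert-extension ==========

lemma natExt_insert_decomp {D : Set (X → ℝ)} (hD : CoherentSDG D) (w t : X → ℝ)
    (ht : t ∈ natExtSet (D ∪ {w})) :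
    t ∈ D ∨ ∃ lam : ℝ, 0 < lam ∧ ∃ m : X → ℝ, (m ∈ D ∨ m = 0) ∧ t = m + lam • w := by
  classical
  obtain ⟨n, l, h, hl, hmem, rfl⟩ := ht
  have hmem' : ∀ i, h i ∈ D ∪ Gpos X ∨ h i = w := by
    intro i
    rcases hmem i with h' | h'
    · rcases h' with h'' | h''
      · exact Or.inl (Set.mem_union_left _ h'')
      · exact Or.inr h''
    · exact Or.inl (Set.mem_union_right _ h')
  by_cases hall : ∀ i, h i ∈ D ∪ Gpos X
  · left
    exact hD.combo_mem Finset.univ Finset.univ_nonempty l h (fun i _ => hl i)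
      (fun i _ => (hall i).elim id (fun hg => Gpos_subset hD hg))
  · right
    push_neg at hall
    obtain ⟨i0, hi0⟩ := hall
    set P : Fin (n+1) → Prop := fun i => h i ∈ D ∪ Gpos X with hP
    have hsplit := Finset.sum_filter_add_sum_filter_not Finset.univ P
      (fun i => l i • h i)
    have hwv : ∀ i ∈ Finset.univ.filter (fun i => ¬ P i), h i = w := by
      intro i hi
      rw [Finset.mem_filter] at hi
      exact (hmem' i).resolve_left hi.2
    have h2 : ∑ i ∈ Finset.univ.filter (fun i => ¬ P i), l i • h i
        = (∑ i ∈ Finset.univ.filter (fun i => ¬ P i), l i) • w := by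
      rw [Finset.sum_smul]
      exact Finset.sum_congr rfl fun i hi => by rw [hwv i hi]
    refine ⟨∑ i ∈ Finset.univ.filter (fun i => ¬ P i), l i, ?_,
      ∑ i ∈ Finset.univ.filter P, l i • h i, ?_, ?_⟩
    · refine Finset.sum_pos (fun i _ => hl i) ⟨i0, ?_⟩
      rw [Finset.mem_filter]
      exact ⟨Finset.mem_univ _, hi0⟩
    · have := hD.combo_mem0 (Finset.univ.filter P) l h
        (fun i _ => (hl i).le)
        (fun i hi => ((Finset.mem_filter.mp hi).2).elim id (fun hg => Gpos_subset hD hg))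
      exact this
    · rw [← h2, hsplit]

lemma natExt_insert_coherent {D : Set (X → ℝ)} (hD : CoherentSDG D) {w : X → ℝ}
    (hw : IsGamble w) (hwne : w ≠ 0) (hwD : w ∉ D) :
    CoherentSDG (natExtSet (D ∪ {-w})) := by
  refine natExtSet_coherent ?_ ?_
  · rintro f (hf | hf)
    · exact hD.subset_gambles f hf
    · rw [Set.mem_singleton_iff] at hf
      rw [hf]; exact hw.neg
  · intro t ht hle
    rcases natExt_insert_decomp hD (-w) t ht with htD | ⟨lam, hlam, m, hm, rfl⟩
    · exact hD.d4 t hle htD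
    · have hle' : ∀ x, m x - lam * w x ≤ 0 := by
        intro x
        have := hle x
        simpa [Pi.add_apply, Pi.smul_apply, smul_eq_mul, mul_comm, sub_eq_add_neg,
          mul_neg] using this
      rcases hm with hmD | hm0
      · apply hwD
        have hrep : w = lam⁻¹ • m + (w - lam⁻¹ • m) := by
          funext x
          simp only [Pi.add_apply, Pi.sub_apply, Pi.smul_apply, smul_eq_mul]
          ring
        rw [hrep]
        refine hD.add_nonneg_mem (hD.d2 _ hmD _ (inv_pos.mpr hlam)) ?_ ?_
        · have hmg : IsGamble m := hD.subset_gambles _ hmD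
          have := hw.add (hmg.smul (-lam⁻¹))
          simpa [sub_eq_add_neg, neg_smul] using this
        · intro x
          simp only [Pi.sub_apply, Pi.smul_apply, smul_eq_mul, Pi.zero_apply]
          have h1 := hle' x
          have h2 : m x ≤ lam * w x := by linarith
          have h3 : lam⁻¹ * m x ≤ lam⁻¹ * (lam * w x) :=
            mul_le_mul_of_nonneg_left h2 (inv_nonneg.mpr hlam.le)
          have h4 : lam⁻¹ * (lam * w x) = w x := by field_simp
          linarith
      · apply hwD
        refine hD.d1 w hw ?_ hwne
        intro x
        have := hle' x
        rw [hm0] at this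
        simp only [Pi.zero_apply, zero_sub, neg_nonpos] at this
        have hlw : 0 ≤ lam * w x := by linarith
        exact le_of_not_gt fun hneg => absurd hlw
          (not_le.mpr (mul_neg_of_pos_of_neg hlam hneg))
-- ========== maximal coherent extension ==========

lemma sUnion_coherent {c : Set (Set (X → ℝ))} (hc : ∀ E ∈ c, CoherentSDG E)
    (hchain : IsChain (· ⊆ ·) c) (hne : c.Nonempty) : CoherentSDG (⋃₀ c) where
  subset_gambles := by
    rintro f ⟨E, hE, hf⟩
    exact (hc E hE).subset_gambles f hf
  d1 := by
    intro f hf h0 hne'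
    obtain ⟨E, hE⟩ := hne
    exact ⟨E, hE, (hc E hE).d1 f hf h0 hne'⟩
  d2 := by
    rintro f ⟨E, hE, hf⟩ l hl
    exact ⟨E, hE, (hc E hE).d2 f hf l hl⟩
  d3 := by
    rintro f ⟨E, hE, hf⟩ g ⟨E', hE', hg⟩
    rcases eq_or_ne E E' with rfl | hne'
    · exact ⟨E, hE, (hc E hE).d3 f hf g hg⟩
    · rcases hchain.total hE hE' with hsub | hsub
      · exact ⟨E', hE', (hc E' hE').d3 f (hsub hf) g hg⟩
      · exact ⟨E, hE, (hc E hE).d3 f hf g (hsub hg)⟩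
  d4 := by
    rintro f hle ⟨E, hE, hf⟩
    exact (hc E hE).d4 f hle hf

lemma exists_maximal_coherent {D : Set (X → ℝ)} (hD : CoherentSDG D) :
    ∃ M, D ⊆ M ∧ CoherentSDG M ∧
      ∀ w : X → ℝ, IsGamble w → w ≠ 0 → w ∉ M → -w ∈ M := by
  obtain ⟨M, hDM, hmax⟩ := zorn_subset_nonempty {E : Set (X → ℝ) | CoherentSDG E}
    (fun c hc hchain hne => ⟨⋃₀ c, sUnion_coherent (fun E hE => hc hE) hchain hne,
      fun E hE => Set.subset_sUnion_of_mem hE⟩) D hD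
  have hM : CoherentSDG M := hmax.1
  refine ⟨M, hDM, hM, fun w hw hwne hwM => ?_⟩
  have hcoh : CoherentSDG (natExtSet (M ∪ {-w})) :=
    natExt_insert_coherent hM hw hwne hwM
  have hsub : M ⊆ natExtSet (M ∪ {-w}) :=
    fun f hf => subset_natExtSet (Set.mem_union_left _ hf)
  have hback : natExtSet (M ∪ {-w}) ⊆ M := hmax.2 hcoh hsub
  exact hback (subset_natExtSet (Set.mem_union_right _ rfl))

-- ========== ElpSet lemmas ==========

lemma Alp_subset {C : Set ((X → ℝ) × Set X)} {lp : (X → ℝ) → Set X → EReal}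
    {D : Set (X → ℝ)} (hC : C ⊆ domC X) (hD : CoherentSDG D)
    (hval : ∀ p ∈ C, lp p.1 p.2 = lpOf D p.1 p.2) :
    Alp C lp ⊆ D := by
  rintro g ⟨p, hp, m, hm, rfl⟩
  have hB : p.2.Nonempty := (hC hp).2
  rw [hval p hp] at hm
  exact mem_of_lt_lpOf hD hB hm

lemma ElpSet_subset {C : Set ((X → ℝ) × Set X)} {lp : (X → ℝ) → Set X → EReal}
    {D : Set (X → ℝ)} (hC : C ⊆ domC X) (hD : CoherentSDG D)
    (hval : ∀ p ∈ C, lp p.1 p.2 = lpOf D p.1 p.2) :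
    ElpSet C lp ⊆ D := natExtSet_subset hD (Alp_subset hC hD hval)

lemma ElpSet_coherent {C : Set ((X → ℝ) × Set X)} {lp : (X → ℝ) → Set X → EReal}
    {D : Set (X → ℝ)} (hC : C ⊆ domC X) (hD : CoherentSDG D)
    (hval : ∀ p ∈ C, lp p.1 p.2 = lpOf D p.1 p.2) :
    CoherentSDG (ElpSet C lp) := by
  have hsub := ElpSet_subset hC hD hval
  exact ⟨fun f hf => hD.subset_gambles f (hsub hf),
    fun f hf h0 hne => Gpos_subset_natExtSet ⟨hf, h0, hne⟩,
    fun f hf l hl => posi_smul hf hl,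
    fun f hf g hg => posi_add hf hg,
    fun f hle hmem => hD.d4 f hle (hsub hmem)⟩

lemma lpOf_ElpSet_eq {C : Set ((X → ℝ) × Set X)} {lp : (X → ℝ) → Set X → EReal}
    {D : Set (X → ℝ)} (hC : C ⊆ domC X) (hD : CoherentSDG D)
    (hval : ∀ p ∈ C, lp p.1 p.2 = lpOf D p.1 p.2)
    {p : (X → ℝ) × Set X} (hp : p ∈ C) :
    lpOf (ElpSet C lp) p.1 p.2 = lp p.1 p.2 := by
  refine le_antisymm ?_ ?_
  · rw [hval p hp]
    exact lpOf_le_lpOf (ElpSet_subset hC hD hval) _ _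
  · exact le_lpOf fun m hm => subset_natExtSet ⟨p, hp, m, hm, rfl⟩
-- ========== finite-dimensional cone separation ==========

lemma cone_sep {N : ℕ} (K : Set (Fin (N + 1) → ℝ))
    (h0 : (0 : Fin (N + 1) → ℝ) ∈ K)
    (hadd : ∀ c ∈ K, ∀ c' ∈ K, c + c' ∈ K)
    (hsmul : ∀ c ∈ K, ∀ a : ℝ, 0 < a → a • c ∈ K)
    (hdisj : ∀ c ∈ K, ∃ i, 0 ≤ c i) :
    ∃ y : Fin (N + 1) → ℝ, (∀ c ∈ K, 0 ≤ ∑ i, y i * c i) ∧ 0 < ∑ i, y i := by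
  classical
  have hconv : Convex ℝ K := by
    intro c hc c' hc' a b ha hb hab
    rcases eq_or_lt_of_le ha with rfl | ha'
    · simp only [zero_smul, zero_add]
      rcases eq_or_lt_of_le hb with rfl | hb'
      · norm_num at hab
      · exact hsmul c' hc' b hb'
    · rcases eq_or_lt_of_le hb with rfl | hb'
      · simpa using hsmul c hc a ha'
      · exact hadd _ (hsmul c hc a ha') _ (hsmul c' hc' b hb')
  set S : Set (Fin (N+1) → ℝ) := {c | ∃ i, 0 ≤ c i} with hS
  have hSclosed : IsClosed S := by
    have : S = ⋃ i, {c : Fin (N+1) → ℝ | 0 ≤ c i} := by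
      ext c; simp [hS]
    rw [this]
    exact isClosed_iUnion_of_finite fun i =>
      isClosed_le continuous_const (continuous_apply i)
  set p : Fin (N+1) → ℝ := fun _ => (-1 : ℝ) with hp
  have hpS : p ∉ S := by
    rintro ⟨i, hi⟩
    norm_num [hp] at hi
  have hpcl : p ∉ closure K := fun h =>
    hpS (hSclosed.closure_subset ((closure_mono hdisj) h))
  obtain ⟨f, u, hfu, hup⟩ := geometric_hahn_banach_closed_point
    hconv.closure isClosed_closure hpcl
  have hu0 : (0 : ℝ) < u := by
    have := hfu 0 (subset_closure h0)
    simpa using this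
  have hfK : ∀ c ∈ K, f c ≤ 0 := by
    intro c hc
    by_contra hpos
    push_neg at hpos
    have h2 := hfu _ (subset_closure (hsmul c hc ((u + 1) / f c)
      (div_pos (by linarith) hpos)))
    rw [map_smul, smul_eq_mul, div_mul_cancel₀] at h2
    · linarith
    · exact ne_of_gt hpos
  have hcoord : ∀ c : Fin (N+1) → ℝ, f c = ∑ i, c i * f (Pi.single i 1) := by
    intro c
    have hc : c = ∑ i, c i • (Pi.single i 1 : Fin (N+1) → ℝ) := by
      rw [← Finset.univ_sum_single c]
      refine Finset.sum_congr rfl fun i _ => ?_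
      funext j
      by_cases hij : j = i
      · subst hij; simp
      · simp [Pi.single_eq_of_ne hij]
    calc f c = f (∑ i, c i • (Pi.single i 1 : Fin (N+1) → ℝ)) := by rw [← hc]
      _ = ∑ i, c i * f (Pi.single i 1) := by
          rw [map_sum]
          exact Finset.sum_congr rfl fun i _ => by rw [map_smul, smul_eq_mul]
  refine ⟨fun i => -(f (Pi.single i 1)), ?_, ?_⟩
  · intro c hc
    have h1 := hfK c hc
    rw [hcoord c] at h1
    have hsum : ∑ i, -(f (Pi.single i 1)) * c i
        = -(∑ i, c i * f (Pi.single i 1)) := by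
      rw [← Finset.sum_neg_distrib]
      exact Finset.sum_congr rfl fun i _ => by ring
    rw [hsum]
    linarith
  · have h1 := hup
    rw [hcoord p] at h1
    have hval : ∑ i, (p i) * f (Pi.single i 1)
        = ∑ i, -(f (Pi.single i 1)) := by
      refine Finset.sum_congr rfl fun i _ => ?_
      rw [hp]; ring
    rw [hval] at h1
    linarith

-- ========== avoiding partial loss for the product ==========

section ProductLemmas

variable {X1 X2 : Type*}

lemma gamble_prod_left {f2 : X2 → ℝ} (hf2 : IsGamble f2) (B1 : Set X1) :
    IsGamble (fun p : X1 × X2 => f2 p.2 * ind B1 p.1) := by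
  obtain ⟨M, hM0, hM⟩ := hf2.bound_nonneg
  refine ⟨M, fun p => ?_⟩
  rw [abs_mul]
  calc |f2 p.2| * |ind B1 p.1| ≤ M * 1 :=
        mul_le_mul (hM p.2) (abs_ind_le_one _ _) (abs_nonneg _) hM0
    _ = M := mul_one M

lemma gamble_prod_right {f1 : X1 → ℝ} (hf1 : IsGamble f1) (B2 : Set X2) :
    IsGamble (fun p : X1 × X2 => f1 p.1 * ind B2 p.2) := by
  obtain ⟨M, hM0, hM⟩ := hf1.bound_nonneg
  refine ⟨M, fun p => ?_⟩
  rw [abs_mul]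
  calc |f1 p.1| * |ind B2 p.2| ≤ M * 1 :=
        mul_le_mul (hM p.1) (abs_ind_le_one _ _) (abs_nonneg _) hM0
    _ = M := mul_one M

lemma IsGamble.slice {t : X1 × X2 → ℝ} (ht : IsGamble t) (x1 : X1) :
    IsGamble (fun x2 => t (x1, x2)) := by
  obtain ⟨M, hM⟩ := ht
  exact ⟨M, fun x2 => hM (x1, x2)⟩

lemma mem_or_zero_of_nonneg {M : Set (X → ℝ)} (hM : CoherentSDG M) {g : X → ℝ}
    (hg : IsGamble g) (h0 : 0 ≤ g) : g ∈ M ∨ g = 0 := by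
  by_cases hz : g = 0
  · exact Or.inr hz
  · exact Or.inl (hM.d1 g hg h0 hz)

lemma memF_nonempty {X : Type*} [Nonempty X] {F : Set (Set X)}
    (hF : ∀ A ∈ F, A.Nonempty) {B : Set X} (hB : B ∈ F ∪ {Set.univ}) :
    B.Nonempty := by
  rcases hB with hB | hB
  · exact hF B hB
  · rw [Set.mem_singleton_iff] at hB
    rw [hB]
    exact Set.univ_nonempty

lemma apl [Nonempty X1] [Nonempty X2] {D1 : Set (X1 → ℝ)} {D2 : Set (X2 → ℝ)}
    {F1 : Set (Set X1)} {F2 : Set (Set X2)}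
    (hD1 : CoherentSDG D1) (hD2 : CoherentSDG D2)
    (hF1 : ∀ A ∈ F1, A.Nonempty) (hF2 : ∀ A ∈ F2, A.Nonempty) :
    ∀ t ∈ indNatExt D1 D2 F1 F2, ¬ t ≤ 0 := by
  classical
  rintro t ⟨n, l, h, hl, hmem, rfl⟩ hle
  have hle' : ∀ x1 x2, (∑ i, l i • h i) (x1, x2) ≤ 0 := fun x1 x2 => hle (x1, x2)
  -- gambles
  have hgam : ∀ i, IsGamble (h i) := by
    intro i
    rcases hmem i with (hi | hi) | hi
    · obtain ⟨f2, hf2, B1, _, heq⟩ := hi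
      rw [heq]; exact gamble_prod_left (hD2.subset_gambles _ hf2) B1
    · obtain ⟨f1, hf1, B2, _, heq⟩ := hi
      rw [heq]; exact gamble_prod_right (hD1.subset_gambles _ hf1) B2
    · exact hi.1
  -- choice of data
  have hch12 : ∀ i : Fin (n+1), ∃ (f2 : X2 → ℝ) (B1 : Set X1),
      h i ∈ A12 D2 F1 → (f2 ∈ D2 ∧ B1 ∈ F1 ∪ {Set.univ} ∧
        h i = fun p => f2 p.2 * ind B1 p.1) := by
    intro i
    by_cases hi : h i ∈ A12 D2 F1
    · obtain ⟨f2, hf2, B1, hB1, heq⟩ := hi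
      exact ⟨f2, B1, fun _ => ⟨hf2, hB1, heq⟩⟩
    · exact ⟨0, ∅, fun hm => absurd hm hi⟩
  choose f2c B1c hspec12 using hch12
  have hch21 : ∀ i : Fin (n+1), ∃ (f1 : X1 → ℝ) (B2 : Set X2),
      h i ∈ A21 D1 F2 → (f1 ∈ D1 ∧ B2 ∈ F2 ∪ {Set.univ} ∧
        h i = fun p => f1 p.1 * ind B2 p.2) := by
    intro i
    by_cases hi : h i ∈ A21 D1 F2
    · obtain ⟨f1, hf1, B2, hB2, heq⟩ := hi
      exact ⟨f1, B2, fun _ => ⟨hf1, hB2, heq⟩⟩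
    · exact ⟨0, ∅, fun hm => absurd hm hi⟩
  choose f1c B2c hspec21 using hch21
  set s12 : Finset (Fin (n+1)) := Finset.univ.filter (fun i => h i ∈ A12 D2 F1)
    with hs12def
  set s21 : Finset (Fin (n+1)) := Finset.univ.filter
    (fun i => ¬ h i ∈ A12 D2 F1 ∧ h i ∈ A21 D1 F2) with hs21def
  set spos : Finset (Fin (n+1)) := Finset.univ.filter
    (fun i => ¬ h i ∈ A12 D2 F1 ∧ ¬ h i ∈ A21 D1 F2) with hsposdef
  have hmem12 : ∀ i ∈ s12, h i ∈ A12 D2 F1 := by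
    intro i hi
    rw [hs12def, Finset.mem_filter] at hi
    exact hi.2
  have hmem21s : ∀ i ∈ s21, h i ∈ A21 D1 F2 := by
    intro i hi
    rw [hs21def, Finset.mem_filter] at hi
    exact hi.2.2
  have hsposG : ∀ i ∈ spos, h i ∈ Gpos (X1 × X2) := by
    intro i hi
    rw [hsposdef, Finset.mem_filter] at hi
    rcases hmem i with (h' | h') | h'
    · exact absurd h' hi.2.1
    · exact absurd h' hi.2.2
    · exact h'
  -- the three partial sums, pointwise
  have hident : ∀ x1 x2, (∑ i, l i • h i) (x1, x2) =
      (∑ i ∈ s12, (l i * ind (B1c i) x1) * f2c i x2)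
      + ((∑ i ∈ s21, (l i * f1c i x1) * ind (B2c i) x2)
      + (∑ i ∈ spos, l i * h i (x1, x2))) := by
    intro x1 x2
    have hsplit : ∑ i, (l i • h i) (x1, x2)
        = ∑ i ∈ s12, (l i • h i) (x1, x2)
        + (∑ i ∈ s21, (l i • h i) (x1, x2) + ∑ i ∈ spos, (l i • h i) (x1, x2)) := by
      rw [hs12def, hs21def, hsposdef]
      rw [← Finset.sum_filter_add_sum_filter_not Finset.univ
        (fun i => h i ∈ A12 D2 F1) (fun i => (l i • h i) (x1, x2))]
      congr 1
      rw [← Finset.sum_filter_add_sum_filter_not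
        (Finset.univ.filter (fun i => ¬ h i ∈ A12 D2 F1))
        (fun i => h i ∈ A21 D1 F2) (fun i => (l i • h i) (x1, x2)),
        Finset.filter_filter, Finset.filter_filter]
    have q1 : ∑ i ∈ s12, (l i • h i) (x1, x2)
        = ∑ i ∈ s12, (l i * ind (B1c i) x1) * f2c i x2 := by
      refine Finset.sum_congr rfl fun i hi => ?_
      have hspec := hspec12 i (hmem12 i hi)
      rw [Pi.smul_apply, smul_eq_mul, hspec.2.2]
      ring
    have q2 : ∑ i ∈ s21, (l i • h i) (x1, x2)
        = ∑ i ∈ s21, (l i * f1c i x1) * ind (B2c i) x2 := by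
      refine Finset.sum_congr rfl fun i hi => ?_
      have hspec := hspec21 i (hmem21s i hi)
      rw [Pi.smul_apply, smul_eq_mul, hspec.2.2]
      ring
    have q3 : ∑ i ∈ spos, (l i • h i) (x1, x2)
        = ∑ i ∈ spos, l i * h i (x1, x2) :=
      Finset.sum_congr rfl fun i _ => by rw [Pi.smul_apply, smul_eq_mul]
    rw [Finset.sum_apply, hsplit, q1, q2, q3]
  by_cases hs21 : s21.Nonempty
  · -- main case : use a maximal extension of D2 and separation
    obtain ⟨M2, hD2M2, hM2, hM2max⟩ := exists_maximal_coherent hD2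
    set w : (Fin (n+1) → ℝ) → (X2 → ℝ) :=
      fun c => ∑ i ∈ s21, c i • (ind (B2c i)) with hwdef
    have hwapply : ∀ c x2, w c x2 = ∑ i ∈ s21, c i * ind (B2c i) x2 := by
      intro c x2
      show (∑ i ∈ s21, c i • ind (B2c i)) x2 = _
      rw [Finset.sum_apply]
      exact Finset.sum_congr rfl fun i _ => by rw [Pi.smul_apply, smul_eq_mul]
    have hwadd : ∀ c c', w (c + c') = w c + w c' := by
      intro c c'
      funext x2
      rw [Pi.add_apply, hwapply, hwapply, hwapply, ← Finset.sum_add_distrib]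
      exact Finset.sum_congr rfl fun i _ => by rw [Pi.add_apply]; ring
    have hwsmul : ∀ (a : ℝ) c, w (a • c) = a • w c := by
      intro a c
      funext x2
      rw [Pi.smul_apply, smul_eq_mul, hwapply, hwapply, Finset.mul_sum]
      exact Finset.sum_congr rfl fun i _ => by rw [Pi.smul_apply, smul_eq_mul]; ring
    set K : Set (Fin (n+1) → ℝ) := {c | w c ∈ M2 ∨ w c = 0} with hKdef
    have hw0 : w 0 = 0 := by
      funext x2; rw [hwapply]; simp
    have hK0 : (0 : Fin (n+1) → ℝ) ∈ K := Or.inr hw0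
    have hKadd : ∀ c ∈ K, ∀ c' ∈ K, c + c' ∈ K := by
      intro c hc c' hc'
      have := memU0_add hM2 hc hc'
      rw [hKdef, Set.mem_setOf_eq, hwadd]
      exact this
    have hKsmul : ∀ c ∈ K, ∀ a : ℝ, 0 < a → a • c ∈ K := by
      intro c hc a ha
      rw [hKdef, Set.mem_setOf_eq, hwsmul]
      rcases hc with hc | hc
      · exact Or.inl (hM2.d2 _ hc _ ha)
      · rw [hc, smul_zero]; exact Or.inr rfl
    have hB2ne : ∀ i ∈ s21, (B2c i).Nonempty := by
      intro i hi
      rw [hs21def, Finset.mem_filter] at hi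
      exact memF_nonempty hF2 (hspec21 i hi.2.2).2.1
    have hKdisj : ∀ c ∈ K, ∃ i, 0 ≤ c i := by
      intro c hc
      by_contra hneg
      push_neg at hneg
      obtain ⟨i1, hi1⟩ := hs21
      obtain ⟨x2s, hx2s⟩ := hB2ne i1 hi1
      have hwneg : w c x2s < 0 := by
        rw [hwapply, ← Finset.add_sum_erase _ _ hi1]
        have ht1 : c i1 * ind (B2c i1) x2s < 0 := by
          rw [ind_apply_mem hx2s, mul_one]
          exact hneg i1
        have ht2 : ∑ i ∈ s21.erase i1, c i * ind (B2c i) x2s ≤ 0 :=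
          Finset.sum_nonpos fun i _ =>
            mul_nonpos_of_nonpos_of_nonneg (hneg i).le (ind_nonneg _ _)
        linarith
      have hwle : w c ≤ 0 := by
        intro x2
        rw [hwapply]
        exact Finset.sum_nonpos fun i _ =>
          mul_nonpos_of_nonpos_of_nonneg (hneg i).le (ind_nonneg _ _)
      rcases hc with hc | hc
      · exact hM2.d4 _ hwle hc
      · rw [hc] at hwneg
        simp at hwneg
    obtain ⟨y, hyK, hy0⟩ := cone_sep K hK0 hKadd hKsmul hKdisj
    have hsingle : ∀ (yv : Fin (n+1) → ℝ) (i : Fin (n+1)) (a : ℝ),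
        ∑ j, yv j * (Pi.single i a : Fin (n+1) → ℝ) j = yv i * a := by
      intro yv i a
      rw [Finset.sum_eq_single i]
      · rw [Pi.single_eq_same]
      · intro j _ hj
        rw [Pi.single_eq_of_ne hj, mul_zero]
      · intro hi
        exact absurd (Finset.mem_univ i) hi
    have hyoff : ∀ i, i ∉ s21 → y i = 0 := by
      intro i hi
      have hwz : ∀ a : ℝ, w (Pi.single i a) = 0 := by
        intro a
        funext x2
        rw [hwapply]
        rw [Pi.zero_apply]
        refine Finset.sum_eq_zero fun j hj => ?_
        have hji : j ≠ i := fun hji => hi (hji ▸ hj)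
        rw [Pi.single_eq_of_ne hji, zero_mul]
      have h1 := hyK (Pi.single i 1) (Or.inr (hwz 1))
      have h2 := hyK (Pi.single i (-1)) (Or.inr (hwz (-1)))
      rw [hsingle] at h1
      rw [hsingle] at h2
      linarith
    have hynn : ∀ i, 0 ≤ y i := by
      intro i
      by_cases hi : i ∈ s21
      · have hmemK : (Pi.single i 1 : Fin (n+1) → ℝ) ∈ K := by
          have hwv : w (Pi.single i 1) = ind (B2c i) := by
            funext x2
            rw [hwapply, Finset.sum_eq_single i]
            · rw [Pi.single_eq_same, one_mul]
            · intro j _ hj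
              rw [Pi.single_eq_of_ne hj, zero_mul]
            · intro habs
              exact absurd hi habs
          rw [hKdef, Set.mem_setOf_eq, hwv]
          left
          refine hM2.d1 _ (gamble_ind _) (fun x2 => ind_nonneg _ _) ?_
          obtain ⟨x2s, hx2s⟩ := hB2ne i hi
          intro hz
          have := congrFun hz x2s
          rw [ind_apply_mem hx2s, Pi.zero_apply] at this
          norm_num at this
        have := hyK _ hmemK
        rw [hsingle] at this
        linarith
      · rw [hyoff i hi]
    -- the key pointwise membership
    have hmain : ∀ x1 : X1, ∑ i ∈ s21, (y i * l i) * f1c i x1 ≤ 0 := by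
      intro x1
      set cx : Fin (n+1) → ℝ := fun j => if j ∈ s21 then -(l j * f1c j x1) else 0
        with hcxdef
      have hcxK : cx ∈ K := by
        -- w cx = a2 + gpos + (-t slice)
        have hwcx : w cx = (∑ i ∈ s12, (l i * ind (B1c i) x1) • f2c i)
            + ((∑ i ∈ spos, l i • (fun x2 => h i (x1, x2)))
            + (fun x2 => -((∑ i, l i • h i) (x1, x2)))) := by
          funext x2
          rw [hwapply]
          simp only [Pi.add_apply, Finset.sum_apply, Pi.smul_apply, smul_eq_mul]
          have := hident x1 x2
          rw [Finset.sum_apply] at this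
          simp only [Pi.smul_apply, smul_eq_mul] at this
          have hcs : ∑ i ∈ s21, cx i * ind (B2c i) x2
              = -(∑ i ∈ s21, (l i * f1c i x1) * ind (B2c i) x2) := by
            rw [← Finset.sum_neg_distrib]
            refine Finset.sum_congr rfl fun i hi => ?_
            rw [hcxdef]
            simp only [if_pos hi]
            ring
          rw [hcs]
          linarith [this]
        rw [hKdef, Set.mem_setOf_eq, hwcx]
        refine memU0_add hM2 ?_ (memU0_add hM2 ?_ ?_)
        · exact hM2.combo_mem0 s12 _ _
            (fun i _ => mul_nonneg (hl i).le (ind_nonneg _ _))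
            (fun i hi => hD2M2 ((hspec12 i (hmem12 i hi)).1))
        · refine mem_or_zero_of_nonneg hM2 ?_ ?_
          · refine IsGamble.sum _ _ fun i _ => ?_
            exact ((hgam i).slice x1).smul (l i)
          · intro x2
            rw [Finset.sum_apply, Pi.zero_apply]
            refine Finset.sum_nonneg fun i hi => ?_
            rw [Pi.smul_apply, smul_eq_mul]
            exact mul_nonneg (hl i).le ((hsposG i hi).2.1 (x1, x2))
        · refine mem_or_zero_of_nonneg hM2 ?_ ?_
          · have : IsGamble (∑ i, l i • h i) :=
              IsGamble.sum _ _ fun i _ => (hgam i).smul (l i)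
            have := (this.slice x1).neg
            exact this
          · intro x2
            rw [Pi.zero_apply]
            simp only [Pi.neg_apply]
            linarith [hle' x1 x2]
      have := hyK cx hcxK
      have hsum : ∑ j, y j * cx j = ∑ j ∈ s21, -((y j * l j) * f1c j x1) := by
        rw [← Finset.sum_subset (Finset.subset_univ s21)]
        · refine Finset.sum_congr rfl fun j hj => ?_
          rw [hcxdef]
          simp only [if_pos hj]
          ring
        · intro j _ hj
          rw [hyoff j hj, zero_mul]
      rw [hsum, Finset.sum_neg_distrib] at this
      linarith
    -- derive the contradiction with coherence of D1
    have hex : ∃ i, 0 < y i := by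
      by_contra hno
      push_neg at hno
      have := Finset.sum_nonpos (s := Finset.univ) (fun i _ => hno i)
      linarith
    obtain ⟨iy, hiy⟩ := hex
    have hiys : iy ∈ s21 := by
      by_contra hns
      rw [hyoff iy hns] at hiy
      linarith
    set s' : Finset (Fin (n+1)) := s21.filter (fun j => 0 < y j) with hs'def
    have hgg : (∑ j ∈ s', (y j * l j) • f1c j) ∈ D1 := by
      refine hD1.combo_mem s' ⟨iy, ?_⟩ _ _ ?_ ?_
      · rw [hs'def, Finset.mem_filter]; exact ⟨hiys, hiy⟩
      · intro j hj
        rw [hs'def, Finset.mem_filter] at hj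
        exact mul_pos hj.2 (hl j)
      · intro j hj
        rw [hs'def, Finset.mem_filter] at hj
        have hj21 := hj.1
        rw [hs21def, Finset.mem_filter] at hj21
        exact (hspec21 j hj21.2.2).1
    refine hD1.d4 _ ?_ hgg
    intro x1
    rw [Finset.sum_apply, Pi.zero_apply]
    have heq : ∑ j ∈ s', ((y j * l j) • f1c j) x1
        = ∑ j ∈ s21, (y j * l j) * f1c j x1 := by
      rw [Finset.sum_subset (Finset.filter_subset _ _)]
      · exact Finset.sum_congr rfl fun j _ => by
          rw [Pi.smul_apply, smul_eq_mul]
      · intro j hj hj'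
        have hy0 : y j = 0 := by
          rcases eq_or_lt_of_le (hynn j) with h' | h'
          · exact h'.symm
          · exact absurd (Finset.mem_filter.mpr ⟨hj, h'⟩) hj'
        rw [Pi.smul_apply, smul_eq_mul, hy0, zero_mul, zero_mul]
    rw [heq]
    exact hmain x1
  · by_cases hs12 : s12.Nonempty
    · -- no A21 terms : evaluate at a point of B1c i0
      obtain ⟨i0, hi0⟩ := hs12
      have hi0' := hmem12 i0 hi0
      have hspec := hspec12 i0 hi0'
      obtain ⟨x1s, hx1s⟩ := memF_nonempty hF1 hspec.2.1
      have hs21e : s21 = ∅ := Finset.not_nonempty_iff_eq_empty.mp hs21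
      have htsl : (fun x2 => (∑ i, l i • h i) (x1s, x2)) ∈ D2 := by
        have hrep : (fun x2 => (∑ i, l i • h i) (x1s, x2))
            = ((l i0 * ind (B1c i0) x1s) • f2c i0
              + ∑ i ∈ s12.erase i0, (l i * ind (B1c i) x1s) • f2c i)
              + (fun x2 => ∑ i ∈ spos, l i * h i (x1s, x2)) := by
          funext x2
          rw [hident x1s x2, hs21e]
          simp only [Finset.sum_empty, Pi.add_apply, Finset.sum_apply,
            Pi.smul_apply, smul_eq_mul, zero_add]
          rw [← Finset.add_sum_erase _ (fun i => (l i * ind (B1c i) x1s) * f2c i x2) hi0]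
        rw [hrep]
        have hfirst : ((l i0 * ind (B1c i0) x1s) • f2c i0
            + ∑ i ∈ s12.erase i0, (l i * ind (B1c i) x1s) • f2c i) ∈ D2 := by
          have h1 : (l i0 * ind (B1c i0) x1s) • f2c i0 ∈ D2 := by
            refine hD2.d2 _ hspec.1 _ ?_
            rw [ind_apply_mem hx1s, mul_one]
            exact hl i0
          have h2 := hD2.combo_mem0 (s12.erase i0)
            (fun i => l i * ind (B1c i) x1s) f2c
            (fun i _ => mul_nonneg (hl i).le (ind_nonneg _ _))
            (fun i hi => (hspec12 i (hmem12 i (Finset.mem_of_mem_erase hi))).1)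
          rcases h2 with h2 | h2
          · exact hD2.d3 _ h1 _ h2
          · rw [h2, add_zero]; exact h1
        refine hD2.add_nonneg_mem hfirst ?_ ?_
        · have hg : IsGamble (∑ i ∈ spos, l i • (fun x2 => h i (x1s, x2))) :=
            IsGamble.sum _ _ fun i _ => ((hgam i).slice x1s).smul (l i)
          obtain ⟨M, hM⟩ := hg
          refine ⟨M, fun x2 => ?_⟩
          have hx := hM x2
          rw [Finset.sum_apply] at hx
          simpa [Pi.smul_apply, smul_eq_mul] using hx
        · intro x2
          rw [Pi.zero_apply]
          exact Finset.sum_nonneg fun i hi =>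
            mul_nonneg (hl i).le ((hsposG i hi).2.1 (x1s, x2))
      exact hD2.d4 _ (fun x2 => hle' x1s x2) htsl
    · -- only Gpos terms
      have hall : ∀ i, h i ∈ Gpos (X1 × X2) := by
        intro i
        refine hsposG i ?_
        rw [hsposdef, Finset.mem_filter]
        refine ⟨Finset.mem_univ i, ?_, ?_⟩
        · intro hmem12
          exact hs12 ⟨i, by rw [hs12def, Finset.mem_filter]; exact ⟨Finset.mem_univ i, hmem12⟩⟩
        · intro hmem21
          by_cases h12 : h i ∈ A12 D2 F1
          · exact hs12 ⟨i, by rw [hs12def, Finset.mem_filter]; exact ⟨Finset.mem_univ i, h12⟩⟩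
          · exact hs21 ⟨i, by rw [hs21def, Finset.mem_filter]; exact ⟨Finset.mem_univ i, h12, hmem21⟩⟩
      have hne0 := (hall 0).2.2
      have : ∃ q, h 0 q ≠ 0 := by
        by_contra hq
        push_neg at hq
        exact hne0 (funext hq)
      obtain ⟨q, hq⟩ := this
      have hpos : 0 < h 0 q := lt_of_le_of_ne ((hall 0).2.1 q) (Ne.symm hq)
      have hsum : l 0 * h 0 q ≤ (∑ i, l i • h i) q := by
        rw [Finset.sum_apply]
        refine Finset.single_le_sum (f := fun i => (l i • h i) q) ?_ (Finset.mem_univ 0)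
        intro i _
        exact mul_nonneg (hl i).le ((hall i).2.1 q)
      have hq0 := hle q
      simp only [Pi.zero_apply] at hq0
      nlinarith [mul_pos (hl 0) hpos]

end ProductLemmas


-- ========== coherence of the product, marginalization ==========

section ProductLemmas2

variable {X1 X2 : Type*}

lemma indNatExt_coherent [Nonempty X1] [Nonempty X2]
    {D1 : Set (X1 → ℝ)} {D2 : Set (X2 → ℝ)} {F1 : Set (Set X1)} {F2 : Set (Set X2)}
    (hD1 : CoherentSDG D1) (hD2 : CoherentSDG D2)
    (hF1 : ∀ A ∈ F1, A.Nonempty) (hF2 : ∀ A ∈ F2, A.Nonempty) :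
    CoherentSDG (indNatExt D1 D2 F1 F2) := by
  refine natExtSet_coherent ?_ (apl hD1 hD2 hF1 hF2)
  rintro f (hf | hf)
  · obtain ⟨f2, hf2, B1, _, rfl⟩ := hf
    exact gamble_prod_left (hD2.subset_gambles _ hf2) B1
  · obtain ⟨f1, hf1, B2, _, rfl⟩ := hf
    exact gamble_prod_right (hD1.subset_gambles _ hf1) B2

lemma marg1_of_mem [Nonempty X1] [Nonempty X2]
    {D1 : Set (X1 → ℝ)} {D2 : Set (X2 → ℝ)} {F1 : Set (Set X1)} {F2 : Set (Set X2)}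
    (hD1 : CoherentSDG D1) (hD2 : CoherentSDG D2)
    (hF1 : ∀ A ∈ F1, A.Nonempty) (hF2 : ∀ A ∈ F2, A.Nonempty)
    {h1 : X1 → ℝ} (hg : IsGamble h1) {B2 : Set X2} (hB2 : B2 ∈ F2 ∪ {Set.univ})
    (hmem : (fun p : X1 × X2 => h1 p.1 * ind B2 p.2) ∈ indNatExt D1 D2 F1 F2) :
    h1 ∈ D1 := by
  by_contra hno
  by_cases hz : h1 = 0
  · refine apl hD1 hD2 hF1 hF2 _ hmem ?_
    intro p
    rw [hz]
    simp
  · have hco : CoherentSDG (natExtSet (D1 ∪ {-h1})) :=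
      natExt_insert_coherent hD1 hg hz hno
    have hsub : indNatExt D1 D2 F1 F2 ⊆ indNatExt (natExtSet (D1 ∪ {-h1})) D2 F1 F2 := by
      refine natExtSet_mono (Set.union_subset_union_right _ ?_)
      rintro g ⟨f1, hf1, B2', hB2', rfl⟩
      exact ⟨f1, subset_natExtSet (Set.mem_union_left _ hf1), B2', hB2', rfl⟩
    have hw : (fun p : X1 × X2 => (-h1) p.1 * ind B2 p.2)
        ∈ indNatExt (natExtSet (D1 ∪ {-h1})) D2 F1 F2 :=
      subset_natExtSet (Set.mem_union_right _
        ⟨-h1, subset_natExtSet (Set.mem_union_right _ rfl), B2, hB2, rfl⟩)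
    have hzero : (fun p : X1 × X2 => h1 p.1 * ind B2 p.2)
        + (fun p : X1 × X2 => (-h1) p.1 * ind B2 p.2) = 0 := by
      funext p
      simp only [Pi.add_apply, Pi.neg_apply, Pi.zero_apply]
      ring
    have h0mem : (0 : X1 × X2 → ℝ) ∈ indNatExt (natExtSet (D1 ∪ {-h1})) D2 F1 F2 :=
      hzero ▸ posi_add (hsub hmem) hw
    exact apl hco hD2 hF1 hF2 0 h0mem le_rfl

lemma marg2_of_mem [Nonempty X1] [Nonempty X2]
    {D1 : Set (X1 → ℝ)} {D2 : Set (X2 → ℝ)} {F1 : Set (Set X1)} {F2 : Set (Set X2)}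
    (hD1 : CoherentSDG D1) (hD2 : CoherentSDG D2)
    (hF1 : ∀ A ∈ F1, A.Nonempty) (hF2 : ∀ A ∈ F2, A.Nonempty)
    {h2 : X2 → ℝ} (hg : IsGamble h2) {B1 : Set X1} (hB1 : B1 ∈ F1 ∪ {Set.univ})
    (hmem : (fun p : X1 × X2 => h2 p.2 * ind B1 p.1) ∈ indNatExt D1 D2 F1 F2) :
    h2 ∈ D2 := by
  by_contra hno
  by_cases hz : h2 = 0
  · refine apl hD1 hD2 hF1 hF2 _ hmem ?_
    intro p
    rw [hz]
    simp
  · have hco : CoherentSDG (natExtSet (D2 ∪ {-h2})) :=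
      natExt_insert_coherent hD2 hg hz hno
    have hsub : indNatExt D1 D2 F1 F2 ⊆ indNatExt D1 (natExtSet (D2 ∪ {-h2})) F1 F2 := by
      refine natExtSet_mono (Set.union_subset_union_left _ ?_)
      rintro g ⟨f2, hf2, B1', hB1', rfl⟩
      exact ⟨f2, subset_natExtSet (Set.mem_union_left _ hf2), B1', hB1', rfl⟩
    have hw : (fun p : X1 × X2 => (-h2) p.2 * ind B1 p.1)
        ∈ indNatExt D1 (natExtSet (D2 ∪ {-h2})) F1 F2 :=
      subset_natExtSet (Set.mem_union_left _
        ⟨-h2, subset_natExtSet (Set.mem_union_right _ rfl), B1, hB1, rfl⟩)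
    have hzero : (fun p : X1 × X2 => h2 p.2 * ind B1 p.1)
        + (fun p : X1 × X2 => (-h2) p.2 * ind B1 p.1) = 0 := by
      funext p
      simp only [Pi.add_apply, Pi.neg_apply, Pi.zero_apply]
      ring
    have h0mem : (0 : X1 × X2 → ℝ) ∈ indNatExt D1 (natExtSet (D2 ∪ {-h2})) F1 F2 :=
      hzero ▸ posi_add (hsub hmem) hw
    exact apl hD1 hco hF1 hF2 0 h0mem le_rfl

lemma ind_prod (B1 : Set X1) (B2 : Set X2) (p : X1 × X2) :
    ind (B1 ×ˢ B2) p = ind B1 p.1 * ind B2 p.2 := by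
  by_cases h1 : p.1 ∈ B1
  · by_cases h2 : p.2 ∈ B2
    · rw [ind_apply_mem (Set.mem_prod.mpr ⟨h1, h2⟩), ind_apply_mem h1, ind_apply_mem h2]
      norm_num
    · rw [ind_apply_not_mem (fun hm => h2 (Set.mem_prod.mp hm).2), ind_apply_not_mem h2]
      ring
  · rw [ind_apply_not_mem (fun hm => h1 (Set.mem_prod.mp hm).1), ind_apply_not_mem h1]
    ring

lemma key1 [Nonempty X1] [Nonempty X2]
    {E1 : Set (X1 → ℝ)} {E2 : Set (X2 → ℝ)} {F1 : Set (Set X1)} {F2 : Set (Set X2)}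
    (hE1 : CoherentSDG E1) (hE2 : CoherentSDG E2)
    (hF1 : ∀ A ∈ F1, A.Nonempty) (hF2 : ∀ A ∈ F2, A.Nonempty)
    {f1 : X1 → ℝ} (hgf1 : IsGamble f1) (B1 : Set X1) {B2 : Set X2}
    (hB2 : B2 ∈ F2 ∪ {Set.univ}) :
    lpOf (indNatExt E1 E2 F1 F2) (fun p : X1 × X2 => f1 p.1) (B1 ×ˢ B2)
      = lpOf E1 f1 B1 := by
  have hset : {m : ℝ | (fun x : X1 × X2 => ((fun p : X1 × X2 => f1 p.1) x - m)
        * ind (B1 ×ˢ B2) x) ∈ indNatExt E1 E2 F1 F2}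
      = {m : ℝ | (fun x => (f1 x - m) * ind B1 x) ∈ E1} := by
    ext m
    simp only [Set.mem_setOf_eq]
    have hrew : (fun x : X1 × X2 => ((fun p : X1 × X2 => f1 p.1) x - m) * ind (B1 ×ˢ B2) x)
        = fun p : X1 × X2 => ((fun x1 => (f1 x1 - m) * ind B1 x1) p.1) * ind B2 p.2 := by
      funext p
      rw [ind_prod]
      ring
    rw [hrew]
    constructor
    · intro hm
      exact marg1_of_mem hE1 hE2 hF1 hF2 ((hgf1.sub_const m).mul (gamble_ind B1)) hB2 hm
    · intro hm
      exact subset_natExtSet (Set.mem_union_right _ ⟨_, hm, B2, hB2, rfl⟩)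
  rw [lpOf, lpOf, hset]

lemma key2 [Nonempty X1] [Nonempty X2]
    {E1 : Set (X1 → ℝ)} {E2 : Set (X2 → ℝ)} {F1 : Set (Set X1)} {F2 : Set (Set X2)}
    (hE1 : CoherentSDG E1) (hE2 : CoherentSDG E2)
    (hF1 : ∀ A ∈ F1, A.Nonempty) (hF2 : ∀ A ∈ F2, A.Nonempty)
    {f2 : X2 → ℝ} (hgf2 : IsGamble f2) (B2 : Set X2) {B1 : Set X1}
    (hB1 : B1 ∈ F1 ∪ {Set.univ}) :
    lpOf (indNatExt E1 E2 F1 F2) (fun p : X1 × X2 => f2 p.2) (B1 ×ˢ B2)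
      = lpOf E2 f2 B2 := by
  have hset : {m : ℝ | (fun x : X1 × X2 => ((fun p : X1 × X2 => f2 p.2) x - m)
        * ind (B1 ×ˢ B2) x) ∈ indNatExt E1 E2 F1 F2}
      = {m : ℝ | (fun x => (f2 x - m) * ind B2 x) ∈ E2} := by
    ext m
    simp only [Set.mem_setOf_eq]
    have hrew : (fun x : X1 × X2 => ((fun p : X1 × X2 => f2 p.2) x - m) * ind (B1 ×ˢ B2) x)
        = fun p : X1 × X2 => ((fun x2 => (f2 x2 - m) * ind B2 x2) p.2) * ind B1 p.1 := by
      funext p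
      rw [ind_prod]
      ring
    rw [hrew]
    constructor
    · intro hm
      exact marg2_of_mem hE1 hE2 hF1 hF2 ((hgf2.sub_const m).mul (gamble_ind B2)) hB1 hm
    · intro hm
      exact subset_natExtSet (Set.mem_union_left _ ⟨_, hm, B1, hB1, rfl⟩)
  rw [lpOf, lpOf, hset]

end ProductLemmas2


/-- Theorem 2: the restriction of `lp1 ⊗ lp2` to an independent
domain `C` containing the local domains is the pointwise smallest independent
product of `lp1` and `lp2`, i.e. their independent natural extension. -/
theorem stmt12 {X1 X2 : Type*} [Nonempty X1] [Nonempty X2]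
    (C1 : Set ((X1 → ℝ) × Set X1)) (hC1 : C1 ⊆ domC X1)
    (lp1 : (X1 → ℝ) → Set X1 → EReal) (hlp1 : Coherent C1 lp1)
    (C2 : Set ((X2 → ℝ) × Set X2)) (hC2 : C2 ⊆ domC X2)
    (lp2 : (X2 → ℝ) → Set X2 → EReal) (hlp2 : Coherent C2 lp2)
    (F1 : Set (Set X1)) (F2 : Set (Set X2))
    (hF1 : ∀ A ∈ F1, A.Nonempty) (hF2 : ∀ A ∈ F2, A.Nonempty)
    (C : Set ((X1 × X2 → ℝ) × Set (X1 × X2))) (hC : C ⊆ domC (X1 × X2))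
    (hCind : IndepDomain F1 F2 C)
    (hCC1 : ∀ p ∈ C1, ((fun q : X1 × X2 => p.1 q.1), p.2 ×ˢ (Set.univ : Set X2)) ∈ C)
    (hCC2 : ∀ p ∈ C2, ((fun q : X1 × X2 => p.1 q.2), (Set.univ : Set X1) ×ˢ p.2) ∈ C) :
    IndProductLP F1 F2 C1 lp1 C2 lp2 C (lpProd C1 lp1 C2 lp2 F1 F2) ∧
    (∀ lp : (X1 × X2 → ℝ) → Set (X1 × X2) → EReal,
      IndProductLP F1 F2 C1 lp1 C2 lp2 C lp →
      ∀ p ∈ C, lpProd C1 lp1 C2 lp2 F1 F2 p.1 p.2 ≤ lp p.1 p.2) := by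
  classical
  obtain ⟨D1, hD1, hval1⟩ := hlp1
  obtain ⟨D2, hD2, hval2⟩ := hlp2
  have hE1 : CoherentSDG (ElpSet C1 lp1) := ElpSet_coherent hC1 hD1 hval1
  have hE2 : CoherentSDG (ElpSet C2 lp2) := ElpSet_coherent hC2 hD2 hval2
  have hDpco : CoherentSDG (indNatExt (ElpSet C1 lp1) (ElpSet C2 lp2) F1 F2) :=
    indNatExt_coherent hE1 hE2 hF1 hF2
  have hkey1 : ∀ f1 : X1 → ℝ, IsGamble f1 → ∀ (B1 : Set X1) (B2 : Set X2),
      B2 ∈ F2 ∪ {Set.univ} →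
      lpProd C1 lp1 C2 lp2 F1 F2 (fun p : X1 × X2 => f1 p.1) (B1 ×ˢ B2)
        = lpOf (ElpSet C1 lp1) f1 B1 :=
    fun f1 hg B1 B2 hB2 => key1 hE1 hE2 hF1 hF2 hg B1 hB2
  have hkey2 : ∀ f2 : X2 → ℝ, IsGamble f2 → ∀ (B2 : Set X2) (B1 : Set X1),
      B1 ∈ F1 ∪ {Set.univ} →
      lpProd C1 lp1 C2 lp2 F1 F2 (fun p : X1 × X2 => f2 p.2) (B1 ×ˢ B2)
        = lpOf (ElpSet C2 lp2) f2 B2 :=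
    fun f2 hg B2 B1 hB1 => key2 hE1 hE2 hF1 hF2 hg B2 hB1
  refine ⟨⟨⟨_, hDpco, fun p _ => rfl⟩, ⟨?_, ?_⟩, ?_, ?_⟩, ?_⟩
  · -- epistemic independence, first component
    intro f1 B1 hg hB1 hmem B2 hB2
    rw [hkey1 f1 hg B1 Set.univ (Or.inr rfl), hkey1 f1 hg B1 B2 (Or.inl hB2)]
  · intro f2 B2 hg hB2 hmem B1 hB1
    rw [hkey2 f2 hg B2 Set.univ (Or.inr rfl), hkey2 f2 hg B2 B1 (Or.inl hB1)]
  · -- agreement with lp1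
    intro p hp
    rw [hkey1 p.1 (hC1 hp).1 p.2 Set.univ (Or.inr rfl)]
    exact lpOf_ElpSet_eq hC1 hD1 hval1 hp
  · -- agreement with lp2
    intro p hp
    rw [hkey2 p.1 (hC2 hp).1 p.2 Set.univ (Or.inr rfl)]
    exact lpOf_ElpSet_eq hC2 hD2 hval2 hp
  · -- minimality
    intro lp hlp p hp
    obtain ⟨⟨D', hD', hval'⟩, hEp, hag1, hag2⟩ := hlp
    have hsubD : indNatExt (ElpSet C1 lp1) (ElpSet C2 lp2) F1 F2 ⊆ D' := by
      refine natExtSet_subset hD' ?_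
      rintro g (hg | hg)
      · -- A12 part
        obtain ⟨f2, hf2, B1, hB1, rfl⟩ := hg
        obtain ⟨k, lam, hh, hlam, hmem2, rfl⟩ := hf2
        have hrew : (fun p : X1 × X2 => (∑ i, lam i • hh i) p.2 * ind B1 p.1)
            = ∑ i, lam i • (fun p : X1 × X2 => hh i p.2 * ind B1 p.1) := by
          funext pp
          simp only [Finset.sum_apply, Pi.smul_apply, smul_eq_mul, Finset.sum_mul]
          exact Finset.sum_congr rfl fun i _ => by ring
        rw [hrew]
        refine hD'.combo_mem Finset.univ Finset.univ_nonempty _ _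
          (fun i _ => hlam i) (fun i _ => ?_)
        rcases hmem2 i with hA | hG
        · obtain ⟨q, hq, m, hm, heq⟩ := hA
          have hgq : IsGamble q.1 := (hC2 hq).1
          have hq2ne : q.2.Nonempty := (hC2 hq).2
          have cmem : ((fun pp : X1 × X2 => q.1 pp.2), B1 ×ˢ q.2) ∈ C := by
            rcases hB1 with hB1f | hB1u
            · exact (hCind.2 q.1 q.2 hgq hq2ne B1 hB1f).mp (hCC2 q hq)
            · rw [Set.mem_singleton_iff] at hB1u
              rw [hB1u]
              exact hCC2 q hq
          have hvalB : lp (fun pp : X1 × X2 => q.1 pp.2) (B1 ×ˢ q.2) = lp2 q.1 q.2 := by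
            rcases hB1 with hB1f | hB1u
            · rw [← hEp.2 q.1 q.2 hgq hq2ne (hCC2 q hq) B1 hB1f]
              exact hag2 q hq
            · rw [Set.mem_singleton_iff] at hB1u
              rw [hB1u]
              exact hag2 q hq
          have hm' : (m : EReal) < lpOf D' (fun pp : X1 × X2 => q.1 pp.2) (B1 ×ˢ q.2) := by
            rw [← hval' _ cmem, hvalB]
            exact hm
          have hmemD := mem_of_lt_lpOf hD' ((memF_nonempty hF1 hB1).prod hq2ne) hm'
          have hrew2 : (fun x : X1 × X2 => ((fun pp : X1 × X2 => q.1 pp.2) x - m)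
              * ind (B1 ×ˢ q.2) x) = fun pp : X1 × X2 => hh i pp.2 * ind B1 pp.1 := by
            funext pp
            rw [heq, ind_prod]
            ring
          rw [← hrew2]
          exact hmemD
        · refine hD'.d1 _ (gamble_prod_left hG.1 B1) ?_ ?_
          · intro pp
            exact mul_nonneg (hG.2.1 pp.2) (ind_nonneg _ _)
          · obtain ⟨x1s, hx1s⟩ := memF_nonempty hF1 hB1
            have hex : ∃ x2, hh i x2 ≠ 0 := by
              by_contra hq
              push_neg at hq
              exact hG.2.2 (funext hq)
            obtain ⟨x2s, hx2s⟩ := hex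
            intro hzz
            have hzv := congrFun hzz (x1s, x2s)
            simp only [Pi.zero_apply] at hzv
            rw [ind_apply_mem hx1s, mul_one] at hzv
            exact hx2s hzv
      · -- A21 part
        obtain ⟨f1, hf1, B2, hB2, rfl⟩ := hg
        obtain ⟨k, lam, hh, hlam, hmem1, rfl⟩ := hf1
        have hrew : (fun p : X1 × X2 => (∑ i, lam i • hh i) p.1 * ind B2 p.2)
            = ∑ i, lam i • (fun p : X1 × X2 => hh i p.1 * ind B2 p.2) := by
          funext pp
          simp only [Finset.sum_apply, Pi.smul_apply, smul_eq_mul, Finset.sum_mul]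
          exact Finset.sum_congr rfl fun i _ => by ring
        rw [hrew]
        refine hD'.combo_mem Finset.univ Finset.univ_nonempty _ _
          (fun i _ => hlam i) (fun i _ => ?_)
        rcases hmem1 i with hA | hG
        · obtain ⟨q, hq, m, hm, heq⟩ := hA
          have hgq : IsGamble q.1 := (hC1 hq).1
          have hq1ne : q.2.Nonempty := (hC1 hq).2
          have cmem : ((fun pp : X1 × X2 => q.1 pp.1), q.2 ×ˢ B2) ∈ C := by
            rcases hB2 with hB2f | hB2u
            · exact (hCind.1 q.1 q.2 hgq hq1ne B2 hB2f).mp (hCC1 q hq)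
            · rw [Set.mem_singleton_iff] at hB2u
              rw [hB2u]
              exact hCC1 q hq
          have hvalB : lp (fun pp : X1 × X2 => q.1 pp.1) (q.2 ×ˢ B2) = lp1 q.1 q.2 := by
            rcases hB2 with hB2f | hB2u
            · rw [← hEp.1 q.1 q.2 hgq hq1ne (hCC1 q hq) B2 hB2f]
              exact hag1 q hq
            · rw [Set.mem_singleton_iff] at hB2u
              rw [hB2u]
              exact hag1 q hq
          have hm' : (m : EReal) < lpOf D' (fun pp : X1 × X2 => q.1 pp.1) (q.2 ×ˢ B2) := by
            rw [← hval' _ cmem, hvalB]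
            exact hm
          have hmemD := mem_of_lt_lpOf hD' (hq1ne.prod (memF_nonempty hF2 hB2)) hm'
          have hrew2 : (fun x : X1 × X2 => ((fun pp : X1 × X2 => q.1 pp.1) x - m)
              * ind (q.2 ×ˢ B2) x) = fun pp : X1 × X2 => hh i pp.1 * ind B2 pp.2 := by
            funext pp
            rw [heq, ind_prod]
            ring
          rw [← hrew2]
          exact hmemD
        · refine hD'.d1 _ (gamble_prod_right hG.1 B2) ?_ ?_
          · intro pp
            exact mul_nonneg (hG.2.1 pp.1) (ind_nonneg _ _)
          · obtain ⟨x2s, hx2s⟩ := memF_nonempty hF2 hB2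
            have hex : ∃ x1, hh i x1 ≠ 0 := by
              by_contra hq
              push_neg at hq
              exact hG.2.2 (funext hq)
            obtain ⟨x1s, hx1s⟩ := hex
            intro hzz
            have hzv := congrFun hzz (x1s, x2s)
            simp only [Pi.zero_apply] at hzv
            rw [ind_apply_mem hx2s, mul_one] at hzv
            exact hx1s hzv
    rw [hval' p hp]
    exact lpOf_le_lpOf hsubD p.1 p.2


end IPaper
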